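/- Let 𝒜 : ℝ^{d×d} → ℝ^n be a linear operator given by matrices A₁,…,A_n satisfying 1-smoothness(β), and let U* ∈ ℝ^{d×r}. For each j ∈ [d], let A^j ∈ ℝ^{n×d} be the matrix whose i-th row is the j-th row of A_i, and define Ψ_j = U*ᵀ(A^{jT}A^j/n)U* ∈ ℝ^{r×r}. Then the operator norm satisfies ‖Ψ_j‖ ≤ β·σ₁(U*)², where σ₁(U*) is the largest singular value of U*. -/

import Mathlib

open MeasureTheory ProbabilityTheory Real
open scoped Matrix
open scoped BigOperators ENNReal NNReal

noncomputable section

/-- Euclidean norm of a finitely-indexed real vector. -/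
def enorm2 {ι : Type*} [Fintype ι] (v : ι → ℝ) : ℝ := Real.sqrt (∑ i, v i ^ 2)

/-- Frobenius norm of a matrix. -/
def frob {m k : Type*} [Fintype m] [Fintype k] (M : Matrix m k ℝ) : ℝ :=
  Real.sqrt (∑ i, ∑ j, M i j ^ 2)

/-- The `(2,1)`-norm of a matrix: the sum of the Euclidean norms of its rows. -/
def norm21 {m k : Type*} [Fintype m] [Fintype k] (M : Matrix m k ℝ) : ℝ :=
  ∑ i, enorm2 (M i)

/-- Frobenius (entrywise) inner product of two matrices. -/
def mdot {m k : Type*} [Fintype m] [Fintype k] (M N : Matrix m k ℝ) : ℝ :=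
  ∑ i, ∑ j, M i j * N i j

/-- Euclidean dot product. -/
def vdot {ι : Type*} [Fintype ι] (u v : ι → ℝ) : ℝ := ∑ i, u i * v i

/-- The linear operator `𝒜 : ℝ^{d×d} → ℝ^n` determined by sensing matrices `A`. -/
def opApply {n d : ℕ} (A : Fin n → Matrix (Fin d) (Fin d) ℝ)
    (Θ : Matrix (Fin d) (Fin d) ℝ) : Fin n → ℝ :=
  fun i => mdot (A i) Θ

/-- The adjoint `𝒜*(ε) = ∑ i, ε i • A i`. -/
def adjOp {n d : ℕ} (A : Fin n → Matrix (Fin d) (Fin d) ℝ) (e : Fin n → ℝ) :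
    Matrix (Fin d) (Fin d) ℝ :=
  Matrix.of fun l k => ∑ i, e i * A i l k

/-- The matrix `A^j ∈ ℝ^{n×d}` stacking the `j`-th rows of the sensing matrices. -/
def rowStack {n d : ℕ} (A : Fin n → Matrix (Fin d) (Fin d) ℝ) (j : Fin d) :
    Matrix (Fin n) (Fin d) ℝ :=
  Matrix.of fun i l => A i j l

/-- Largest singular value of a matrix. -/
def sigmaMax {m k : Type*} [Fintype m] [Fintype k] (U : Matrix m k ℝ) : ℝ :=
  sSup {c | ∃ x : k → ℝ, enorm2 x = 1 ∧ c = enorm2 (U.mulVec x)}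

/-- Smallest singular value of a (tall) `d × r` matrix (`σ_r`). -/
def sigmaMin {m k : Type*} [Fintype m] [Fintype k] (U : Matrix m k ℝ) : ℝ :=
  sInf {c | ∃ x : k → ℝ, enorm2 x = 1 ∧ c = enorm2 (U.mulVec x)}

/-- Orthogonal matrix. -/
def IsOrth {r : ℕ} (R : Matrix (Fin r) (Fin r) ℝ) : Prop :=
  R * Rᵀ = 1 ∧ Rᵀ * R = 1

/-- `R` is an orthogonal matrix minimizing the Frobenius distance `‖Û − U⋆R‖_F`
over orthogonal matrices. -/
def IsAligner {d r : ℕ} (Uhat Ustar : Matrix (Fin d) (Fin r) ℝ)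
    (R : Matrix (Fin r) (Fin r) ℝ) : Prop :=
  IsOrth R ∧ ∀ R' : Matrix (Fin r) (Fin r) ℝ, IsOrth R' →
    frob (Uhat - Ustar * R) ≤ frob (Uhat - Ustar * R')

/-- Restricted strong convexity RSC(U⋆, η, τ). -/
def RSC {n d r : ℕ} (A : Fin n → Matrix (Fin d) (Fin d) ℝ)
    (U : Matrix (Fin d) (Fin r) ℝ) (η τ : ℝ) : Prop :=
  ∀ Δ : Matrix (Fin d) (Fin r) ℝ,
    (1 / (n : ℝ)) * enorm2 (opApply A (Δ * Uᵀ + U * Δᵀ + Δ * Δᵀ)) ^ 2 ≥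
      η * frob (Δ * Uᵀ + U * Δᵀ + Δ * Δᵀ) ^ 2
        - τ * (Real.sqrt ((r : ℝ) / n) + Real.sqrt (Real.log d / n)) ^ 2 * norm21 Δ ^ 2

/-- Quadratic compatibility condition QCC(U⋆, κ) with index set `J`. -/
def QCC {n d r : ℕ} (A : Fin n → Matrix (Fin d) (Fin d) ℝ)
    (U : Matrix (Fin d) (Fin r) ℝ) (J : Finset (Fin d)) (κ : ℝ) : Prop :=
  ∀ Δ : Matrix (Fin d) (Fin r) ℝ,
    (∑ j ∈ Jᶜ, enorm2 (Δ j)) ≤ 7 * ∑ j ∈ J, enorm2 (Δ j) →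
    (1 / (n : ℝ)) * enorm2 (opApply A (Δ * Uᵀ + U * Δᵀ + Δ * Δᵀ)) ^ 2 ≥
      (κ / (J.card : ℝ)) * (∑ j ∈ J, enorm2 (Δ j)) ^ 2

/-- `r`-restricted well-conditionedness RWC(α, β). -/
def RWC {n d : ℕ} (A : Fin n → Matrix (Fin d) (Fin d) ℝ) (rk : ℕ) (α β : ℝ) : Prop :=
  3 * α > 2 * β ∧
  ∀ Z : Matrix (Fin d) (Fin d) ℝ, Z.rank ≤ rk →
    α * frob Z ^ 2 ≤ (1 / (n : ℝ)) * enorm2 (opApply A Z) ^ 2 ∧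
    (1 / (n : ℝ)) * enorm2 (opApply A Z) ^ 2 ≤ β * frob Z ^ 2

/-- `r`-smoothness(β). -/
def RSmooth {n d : ℕ} (A : Fin n → Matrix (Fin d) (Fin d) ℝ) (rk : ℕ) (β : ℝ) : Prop :=
  ∀ Z : Matrix (Fin d) (Fin d) ℝ, Z.rank ≤ rk →
    (1 / (n : ℝ)) * enorm2 (opApply A Z) ^ 2 ≤ β * frob Z ^ 2

/-- A real random variable `z` is `σ`-subgaussian. -/
def Subg {Ω : Type*} [MeasurableSpace Ω] (μ : Measure Ω) (z : Ω → ℝ) (σ : ℝ) : Prop :=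
  ∀ t : ℝ, ∫ ω, Real.exp (t * z ω) ∂μ ≤ Real.exp (t ^ 2 * σ ^ 2 / 2)

/-- The matrix `Ψ_j = U⋆ᵀ (A^{jT} A^j / n) U⋆`. -/
def PsiMat {n d r : ℕ} (A : Fin n → Matrix (Fin d) (Fin d) ℝ)
    (U : Matrix (Fin d) (Fin r) ℝ) (j : Fin d) : Matrix (Fin r) (Fin r) ℝ :=
  Uᵀ * ((1 / (n : ℝ)) • ((rowStack A j)ᵀ * rowStack A j)) * U

/-- The matrix `Φ_j`, i.e. `Ψ_j` for the transposed sensing matrices. -/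
def PhiMat {n d r : ℕ} (A : Fin n → Matrix (Fin d) (Fin d) ℝ)
    (U : Matrix (Fin d) (Fin r) ℝ) (j : Fin d) : Matrix (Fin r) (Fin r) ℝ :=
  PsiMat (fun i => (A i)ᵀ) U j

end

noncomputable section
lemma enorm2_nonneg' {ι : Type*} [Fintype ι] (v : ι → ℝ) : 0 ≤ enorm2 v := Real.sqrt_nonneg _

lemma enorm2_sq' {ι : Type*} [Fintype ι] (v : ι → ℝ) : enorm2 v ^ 2 = ∑ i, v i ^ 2 :=
  Real.sq_sqrt (Finset.sum_nonneg fun _ _ => sq_nonneg _)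

lemma sum_sq_eq_zero' {ι : Type*} [Fintype ι] {v : ι → ℝ} (h : ∑ i, v i ^ 2 = 0) : v = 0 := by
  funext i
  have := (Finset.sum_eq_zero_iff_of_nonneg fun i _ => sq_nonneg (v i)).1 h i (Finset.mem_univ i)
  exact pow_eq_zero_iff two_ne_zero |>.1 this

lemma enorm2_smul' {ι : Type*} [Fintype ι] (a : ℝ) (v : ι → ℝ) :
    enorm2 (a • v) = |a| * enorm2 v := by
  unfold enorm2
  rw [← Real.sqrt_sq_eq_abs, ← Real.sqrt_mul (sq_nonneg a), Finset.mul_sum]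
  simp [mul_pow]

lemma sigmaMax_nonneg' {m k : Type*} [Fintype m] [Fintype k] (U : Matrix m k ℝ) :
    0 ≤ sigmaMax U :=
  Real.sSup_nonneg (by rintro c ⟨x, hx, rfl⟩; exact enorm2_nonneg' _)

lemma sigmaMax_bdd' {m k : Type*} [Fintype m] [Fintype k] (U : Matrix m k ℝ) :
    BddAbove {c | ∃ x : k → ℝ, enorm2 x = 1 ∧ c = enorm2 (U.mulVec x)} := by
  refine ⟨frob U, ?_⟩
  rintro c ⟨x, hx, rfl⟩
  have hx2 : ∑ j, x j ^ 2 = 1 := by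
    have h := enorm2_sq' x; rw [hx, one_pow] at h; exact h.symm
  unfold enorm2 frob
  apply Real.sqrt_le_sqrt
  calc ∑ i, (U.mulVec x) i ^ 2
      ≤ ∑ i, (∑ j, U i j ^ 2) * (∑ j, x j ^ 2) := by
        refine Finset.sum_le_sum fun i _ => ?_
        simpa [Matrix.mulVec, dotProduct] using
          Finset.sum_mul_sq_le_sq_mul_sq Finset.univ (U i) x
    _ = ∑ i, ∑ j, U i j ^ 2 := by simp [hx2]

lemma enorm2_mulVec_le' {m k : Type*} [Fintype m] [Fintype k] (U : Matrix m k ℝ) (x : k → ℝ) :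
    enorm2 (U.mulVec x) ≤ sigmaMax U * enorm2 x := by
  rcases eq_or_ne (enorm2 x) 0 with h0 | h0
  · have hx : x = 0 := by
      apply sum_sq_eq_zero'
      have h := enorm2_sq' x; rw [h0] at h; simpa using h.symm
    simp [hx, h0, enorm2]
  · have hpos : 0 < enorm2 x := lt_of_le_of_ne (enorm2_nonneg' x) (Ne.symm h0)
    set s := enorm2 x with hs
    have hunit : enorm2 (s⁻¹ • x) = 1 := by
      rw [enorm2_smul', abs_of_pos (inv_pos.2 hpos), ← hs]
      field_simp
    have hle : enorm2 (U.mulVec (s⁻¹ • x)) ≤ sigmaMax U :=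
      le_csSup (sigmaMax_bdd' U) ⟨_, hunit, rfl⟩
    rw [Matrix.mulVec_smul, enorm2_smul', abs_of_pos (inv_pos.2 hpos)] at hle
    calc enorm2 (U.mulVec x) = s * (s⁻¹ * enorm2 (U.mulVec x)) := by field_simp
      _ ≤ s * sigmaMax U := mul_le_mul_of_nonneg_left hle hpos.le
      _ = sigmaMax U * s := mul_comm _ _

lemma psi_dot' {n d r : ℕ} (A : Fin n → Matrix (Fin d) (Fin d) ℝ)
    (U : Matrix (Fin d) (Fin r) ℝ) (j : Fin d) (x y : Fin r → ℝ) :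
    y ⬝ᵥ (PsiMat A U j).mulVec x
      = (1 / (n : ℝ)) *
        ((rowStack A j).mulVec (U.mulVec y) ⬝ᵥ (rowStack A j).mulVec (U.mulVec x)) := by
  unfold PsiMat
  rw [← Matrix.mulVec_mulVec, ← Matrix.mulVec_mulVec, Matrix.smul_mulVec,
      Matrix.mulVec_smul, dotProduct_smul, ← Matrix.mulVec_mulVec,
      Matrix.dotProduct_mulVec, Matrix.vecMul_transpose,
      Matrix.dotProduct_mulVec, Matrix.vecMul_transpose]
  simp [smul_eq_mul]

lemma smooth_row' {n d : ℕ} (A : Fin n → Matrix (Fin d) (Fin d) ℝ) {β : ℝ}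
    (hSm : RSmooth A 1 β) (j : Fin d) (w : Fin d → ℝ) :
    (1 / (n : ℝ)) * (∑ i, ((rowStack A j).mulVec w) i ^ 2) ≤ β * ∑ k, w k ^ 2 := by
  have hZ : (Matrix.vecMulVec (Pi.single j (1 : ℝ)) w).rank ≤ 1 := by
    rw [Matrix.vecMulVec_eq (Fin 1)]
    exact le_trans (Matrix.rank_mul_le_right _ _)
      (le_trans (Matrix.rank_le_card_height _) (by simp))
  have h := hSm _ hZ
  have hop : opApply A (Matrix.vecMulVec (Pi.single j 1) w) = (rowStack A j).mulVec w := by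
    funext i
    simp only [opApply, mdot, Matrix.vecMulVec_apply]
    rw [Finset.sum_eq_single j]
    · simp [rowStack, Matrix.mulVec, dotProduct]
    · intro l _ hlj; simp [Pi.single_apply, hlj]
    · simp
  have hfrob : frob (Matrix.vecMulVec (Pi.single j 1) w) ^ 2 = ∑ k, w k ^ 2 := by
    unfold frob
    erw [Real.sq_sqrt (Finset.sum_nonneg fun _ _ => Finset.sum_nonneg fun _ _ => sq_nonneg _)]
    rw [Finset.sum_eq_single j]
    · simp [Matrix.vecMulVec_apply]
    · intro l _ hlj; simp [Matrix.vecMulVec_apply, Pi.single_apply, hlj]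
    · simp
  rw [hop, enorm2_sq'] at h
  rw [hfrob] at h
  exact h

lemma key' {n d r : ℕ} (A : Fin n → Matrix (Fin d) (Fin d) ℝ) {β : ℝ}
    (hSm : RSmooth A 1 β) (hβ : 0 ≤ β) (U : Matrix (Fin d) (Fin r) ℝ) (j : Fin d)
    (x : Fin r → ℝ) :
    (1 / (n : ℝ)) * (∑ i, ((rowStack A j).mulVec (U.mulVec x)) i ^ 2)
      ≤ (β * sigmaMax U ^ 2) * ∑ k, x k ^ 2 := by
  have h1 := smooth_row' A hSm j (U.mulVec x)
  have h2 : ∑ l, (U.mulVec x) l ^ 2 ≤ sigmaMax U ^ 2 * ∑ k, x k ^ 2 := by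
    have := enorm2_mulVec_le' U x
    have hsq := pow_le_pow_left₀ (enorm2_nonneg' _) this 2
    rw [enorm2_sq', mul_pow, enorm2_sq'] at hsq
    exact hsq
  calc (1 / (n : ℝ)) * (∑ i, ((rowStack A j).mulVec (U.mulVec x)) i ^ 2)
      ≤ β * ∑ l, (U.mulVec x) l ^ 2 := h1
    _ ≤ β * (sigmaMax U ^ 2 * ∑ k, x k ^ 2) := mul_le_mul_of_nonneg_left h2 hβ
    _ = (β * sigmaMax U ^ 2) * ∑ k, x k ^ 2 := by ring
end


/-- operator-norm bound `‖Ψ_j‖ ≤ β σ₁(U*)²` under 1-smoothness(β). -/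
theorem stmt_18 {d r n : ℕ} (hn : 0 < n)
    (A : Fin n → Matrix (Fin d) (Fin d) ℝ) (β : ℝ)
    (hSm : RSmooth A 1 β)
    (Ustar : Matrix (Fin d) (Fin r) ℝ) (j : Fin d) :
    sigmaMax (PsiMat A Ustar j) ≤ β * sigmaMax Ustar ^ 2 := by
  set c := β * sigmaMax Ustar ^ 2 with hc
  rcases le_or_gt 0 β with hβ | hβ
  · -- β ≥ 0
    have hc0 : 0 ≤ c := mul_nonneg hβ (sq_nonneg _)
    apply Real.sSup_le _ hc0
    rintro e ⟨x, hx, rfl⟩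
    have hx2 : ∑ k, x k ^ 2 = 1 := by
      have h := enorm2_sq' x; rw [hx, one_pow] at h; exact h.symm
    set y := (PsiMat A Ustar j).mulVec x with hy
    set vx := (rowStack A j).mulVec (Ustar.mulVec x) with hvx
    set vy := (rowStack A j).mulVec (Ustar.mulVec y) with hvy
    have h1 : (1 / (n : ℝ)) * ∑ i, vy i ^ 2 ≤ c * ∑ k, y k ^ 2 := key' A hSm hβ Ustar j y
    have h2 : (1 / (n : ℝ)) * ∑ i, vx i ^ 2 ≤ c := by
      have := key' A hSm hβ Ustar j x
      rwa [hx2, mul_one] at this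
    have hb1 : (0:ℝ) ≤ (1 / (n : ℝ)) * ∑ i, vy i ^ 2 :=
      mul_nonneg (by positivity) (Finset.sum_nonneg fun _ _ => sq_nonneg _)
    have hb2 : (0:ℝ) ≤ (1 / (n : ℝ)) * ∑ i, vx i ^ 2 :=
      mul_nonneg (by positivity) (Finset.sum_nonneg fun _ _ => sq_nonneg _)
    have hsq : enorm2 y ^ 2 = (1 / (n : ℝ)) * (vy ⬝ᵥ vx) := by
      rw [enorm2_sq']
      have : ∑ k, y k ^ 2 = y ⬝ᵥ (PsiMat A Ustar j).mulVec x := by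
        simp [dotProduct, hy, sq]
      rw [this, psi_dot' A Ustar j x y]
    have hCS : ((1 / (n : ℝ)) * (vy ⬝ᵥ vx)) ^ 2
        ≤ ((1 / (n : ℝ)) * ∑ i, vy i ^ 2) * ((1 / (n : ℝ)) * ∑ i, vx i ^ 2) := by
      have := Finset.sum_mul_sq_le_sq_mul_sq Finset.univ vy vx
      calc ((1 / (n : ℝ)) * (vy ⬝ᵥ vx)) ^ 2
          = (1 / (n : ℝ)) ^ 2 * (∑ i, vy i * vx i) ^ 2 := by
            simp [dotProduct, mul_pow]
        _ ≤ (1 / (n : ℝ)) ^ 2 * ((∑ i, vy i ^ 2) * ∑ i, vx i ^ 2) :=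
            mul_le_mul_of_nonneg_left this (by positivity)
        _ = ((1 / (n : ℝ)) * ∑ i, vy i ^ 2) * ((1 / (n : ℝ)) * ∑ i, vx i ^ 2) := by ring
    have hy2 : ∑ k, y k ^ 2 = enorm2 y ^ 2 := (enorm2_sq' y).symm
    have hfin : enorm2 y ^ 2 ≤ c * enorm2 y := by
      have step1 : enorm2 y ^ 2 ≤ Real.sqrt (((1 / (n : ℝ)) * ∑ i, vy i ^ 2)
          * ((1 / (n : ℝ)) * ∑ i, vx i ^ 2)) := by
        rw [hsq]
        calc (1 / (n : ℝ)) * (vy ⬝ᵥ vx) ≤ |(1 / (n : ℝ)) * (vy ⬝ᵥ vx)| := le_abs_self _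
          _ = Real.sqrt (((1 / (n : ℝ)) * (vy ⬝ᵥ vx)) ^ 2) := (Real.sqrt_sq_eq_abs _).symm
          _ ≤ _ := Real.sqrt_le_sqrt hCS
      have step2 : Real.sqrt (((1 / (n : ℝ)) * ∑ i, vy i ^ 2)
          * ((1 / (n : ℝ)) * ∑ i, vx i ^ 2)) ≤ Real.sqrt ((c * enorm2 y ^ 2) * c) := by
        apply Real.sqrt_le_sqrt
        apply mul_le_mul _ h2 hb2 (by positivity)
        rw [← hy2]; exact h1
      have step3 : Real.sqrt ((c * enorm2 y ^ 2) * c) = c * enorm2 y := by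
        rw [show (c * enorm2 y ^ 2) * c = (c * enorm2 y) ^ 2 by ring,
          Real.sqrt_sq (mul_nonneg hc0 (enorm2_nonneg' _))]
      exact step1.trans (step2.trans_eq step3)
    rcases eq_or_ne (enorm2 y) 0 with h0 | h0
    · rw [h0]; exact hc0
    · have hpos : 0 < enorm2 y := lt_of_le_of_ne (enorm2_nonneg' y) (Ne.symm h0)
      have := hfin
      rw [sq] at this
      exact le_of_mul_le_mul_right this hpos
  · -- β < 0 : everything degenerates
    have hU0 : ∀ x : Fin r → ℝ, Ustar.mulVec x = 0 := by
      intro x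
      apply sum_sq_eq_zero'
      have h1 := smooth_row' A hSm j (Ustar.mulVec x)
      have hL : (0:ℝ) ≤ (1 / (n : ℝ)) * (∑ i, ((rowStack A j).mulVec (Ustar.mulVec x)) i ^ 2) :=
        mul_nonneg (by positivity) (Finset.sum_nonneg fun _ _ => sq_nonneg _)
      have h2 : (0:ℝ) ≤ β * ∑ k, (Ustar.mulVec x) k ^ 2 := le_trans hL h1
      by_contra hne
      have hpos : 0 < ∑ k, (Ustar.mulVec x) k ^ 2 :=
        lt_of_le_of_ne (Finset.sum_nonneg fun _ _ => sq_nonneg _) (Ne.symm hne)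
      nlinarith
    have hσ : sigmaMax Ustar = 0 := by
      apply le_antisymm _ (sigmaMax_nonneg' Ustar)
      apply Real.sSup_le _ le_rfl
      rintro e ⟨x, hx, rfl⟩
      rw [hU0 x]
      simp [enorm2]
    have hΨ : ∀ x : Fin r → ℝ, (PsiMat A Ustar j).mulVec x = 0 := by
      intro x
      unfold PsiMat
      rw [← Matrix.mulVec_mulVec, ← Matrix.mulVec_mulVec, hU0 x]
      simp
    have hc0 : c = 0 := by rw [hc, hσ]; ring
    rw [hc0]
    apply Real.sSup_le _ le_rfl
    rintro e ⟨x, hx, rfl⟩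
    rw [hΨ x]
    simp [enorm2]
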